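/- arXiv:2205.07013 — 3 statements merged into one kernel-verified Lean document; each statement's English description precedes it below -/
import Mathlib

section
/- For a, γ > 0 and f_± := φ ± i γ T_{1/a} φ (where T_x denotes translation by x and φ is the normalized Gaussian), the Gabor transforms satisfy |𝒢f_±(x,ω)| = e^{-π(x²+ω²)/2} · |1 ± i γ e^{(π/a)(x - iω)} e^{-π/(2a²)}| for all (x,ω) ∈ ℝ². -/
open MeasureTheory

/-- The Gabor transform with Gaussian window. -/
noncomputable def gabor (f : ℝ → ℂ) (x ω : ℝ) : ℂ :=
  (2 : ℂ) ^ ((1 : ℂ) / 4) *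
    ∫ t : ℝ, f t * Complex.exp (-(Real.pi : ℂ) * ((t : ℂ) - (x : ℂ)) ^ 2) *
      Complex.exp (-2 * (Real.pi : ℂ) * Complex.I * (t : ℂ) * (ω : ℂ))

/-- The normalized Gaussian φ(t) = 2^{1/4} e^{-π t²}. -/
noncomputable def gauss (t : ℝ) : ℂ :=
  (2 : ℂ) ^ ((1 : ℂ) / 4) * Complex.exp (-(Real.pi : ℂ) * (t : ℂ) ^ 2)

lemma integrand_eq (y x ω t : ℝ) :
    gauss (t - y) * Complex.exp (-(Real.pi : ℂ) * ((t : ℂ) - (x : ℂ)) ^ 2) *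
      Complex.exp (-2 * (Real.pi : ℂ) * Complex.I * (t : ℂ) * (ω : ℂ)) =
    (2 : ℂ) ^ ((1 : ℂ) / 4) * Complex.exp (-(2 * (Real.pi : ℂ)) * (t : ℂ) ^ 2 +
      (2 * (Real.pi : ℂ) * ((x : ℂ) + (y : ℂ)) - 2 * Real.pi * Complex.I * ω) * t +
      (-(Real.pi : ℂ) * ((x : ℂ) ^ 2 + (y : ℂ) ^ 2))) := by
  unfold gauss
  rw [mul_assoc, mul_assoc, ← Complex.exp_add, ← Complex.exp_add]
  push_cast
  ring_nf

lemma gabor_shift (y x ω : ℝ) :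
    gabor (fun t => gauss (t - y)) x ω =
      Complex.exp (-(Real.pi : ℂ) * ((x : ℂ) ^ 2 + (y : ℂ) ^ 2) +
        (Real.pi : ℂ) / 2 * ((x : ℂ) + (y : ℂ) - Complex.I * ω) ^ 2) := by
  unfold gabor
  simp_rw [integrand_eq]
  rw [integral_const_mul,
    integral_cexp_quadratic (b := -(2 * (Real.pi : ℂ))) (by simp [Real.pi_pos]) _ _]
  have hπ : (Real.pi : ℂ) ≠ 0 := Complex.ofReal_ne_zero.mpr Real.pi_ne_zero
  have h1 : (Real.pi : ℂ) / - -(2 * (Real.pi : ℂ)) = 2⁻¹ := by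
    field_simp
  rw [h1]
  have harg : (2 : ℂ).arg ≠ Real.pi := by
    have : (2 : ℂ).arg = 0 := by
      simp
    rw [this]; exact fun h => Real.pi_ne_zero h.symm
  have h2 : ((2 : ℂ)⁻¹) ^ ((1:ℂ)/2) = ((2:ℂ) ^ ((1:ℂ)/2))⁻¹ :=
    Complex.inv_cpow _ _ harg
  have h3 : (2 : ℂ) ^ ((1:ℂ)/4) * (2 : ℂ) ^ ((1:ℂ)/4) * ((2:ℂ) ^ ((1:ℂ)/2))⁻¹ = 1 := by
    rw [← Complex.cpow_add _ _ (two_ne_zero)]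
    norm_num

  rw [h2, ← mul_assoc, ← mul_assoc, h3, one_mul]
  congr 1
  field_simp
  ring

lemma integrable_integrand (y x ω : ℝ) :
    Integrable (fun t : ℝ => gauss (t - y) *
      Complex.exp (-(Real.pi : ℂ) * ((t : ℂ) - (x : ℂ)) ^ 2) *
      Complex.exp (-2 * (Real.pi : ℂ) * Complex.I * (t : ℂ) * (ω : ℂ))) := by
  simp_rw [integrand_eq]
  exact (integrable_cexp_quadratic (b := 2 * (Real.pi : ℂ)) (by simp [Real.pi_pos]) _ _).const_mul _

/-- |𝒢f_±(x,ω)| = e^{-π(x²+ω²)/2} |1 ± iγ e^{(π/a)(x-iω)} e^{-π/(2a²)}|, where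
f_± = φ ± iγ T_{1/a} φ and ε = ±1 encodes the sign. -/
theorem gabor_counterexample_magnitude (a γ : ℝ) (ha : 0 < a) (hγ : 0 < γ)
    (ε : ℝ) (hε : ε = 1 ∨ ε = -1) (f : ℝ → ℂ)
    (hf : f = fun t => gauss t + (ε : ℂ) * Complex.I * (γ : ℂ) * gauss (t - 1 / a)) :
    ∀ x ω : ℝ,
      ‖gabor f x ω‖ =
        Real.exp (-Real.pi / 2 * (x ^ 2 + ω ^ 2)) *
          ‖(1 + (ε : ℂ) * Complex.I * (γ : ℂ) *
              Complex.exp (((Real.pi : ℂ) / (a : ℂ)) * ((x : ℂ) - Complex.I * (ω : ℂ))) *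
              (Real.exp (-Real.pi / (2 * a ^ 2)) : ℂ))‖ := by
  intro x ω
  have ha' : (a : ℂ) ≠ 0 := Complex.ofReal_ne_zero.mpr ha.ne'
  set c : ℂ := (ε : ℂ) * Complex.I * (γ : ℂ) with hc
  have hsplit : gabor f x ω = gabor (fun t => gauss (t - 0)) x ω +
      c * gabor (fun t => gauss (t - 1 / a)) x ω := by
    unfold gabor
    rw [hf]
    have h : ∀ t : ℝ, (gauss t + c * gauss (t - 1 / a)) *
        Complex.exp (-(Real.pi : ℂ) * ((t : ℂ) - (x : ℂ)) ^ 2) *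
        Complex.exp (-2 * (Real.pi : ℂ) * Complex.I * (t : ℂ) * (ω : ℂ)) =
        gauss (t - 0) * Complex.exp (-(Real.pi : ℂ) * ((t : ℂ) - (x : ℂ)) ^ 2) *
          Complex.exp (-2 * (Real.pi : ℂ) * Complex.I * (t : ℂ) * (ω : ℂ)) +
        c * (gauss (t - 1 / a) * Complex.exp (-(Real.pi : ℂ) * ((t : ℂ) - (x : ℂ)) ^ 2) *
          Complex.exp (-2 * (Real.pi : ℂ) * Complex.I * (t : ℂ) * (ω : ℂ))) := by
      intro t; rw [sub_zero]; ring
    simp_rw [h]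
    rw [integral_add (integrable_integrand 0 x ω)
      ((integrable_integrand (1 / a) x ω).const_mul c), integral_const_mul]
    ring
  have e1 : Complex.exp (-(Real.pi : ℂ) * ((x : ℂ) ^ 2 + ((0:ℝ) : ℂ) ^ 2) +
      (Real.pi : ℂ) / 2 * ((x : ℂ) + ((0:ℝ) : ℂ) - Complex.I * ω) ^ 2) =
      Complex.exp ((-Real.pi / 2 * (x ^ 2 + ω ^ 2) : ℝ)) *
        Complex.exp ((-(Real.pi * x * ω) : ℝ) * Complex.I) := by
    rw [← Complex.exp_add]; congr 1; push_cast
    ring_nf; simp only [Complex.I_sq]; ring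
  have e2 : Complex.exp (-(Real.pi : ℂ) * ((x : ℂ) ^ 2 + ((1/a : ℝ) : ℂ) ^ 2) +
      (Real.pi : ℂ) / 2 * ((x : ℂ) + ((1/a : ℝ) : ℂ) - Complex.I * ω) ^ 2) =
      Complex.exp ((-Real.pi / 2 * (x ^ 2 + ω ^ 2) : ℝ)) *
        Complex.exp ((-(Real.pi * x * ω) : ℝ) * Complex.I) *
        (Complex.exp (((Real.pi : ℂ) / (a : ℂ)) * ((x : ℂ) - Complex.I * (ω : ℂ))) *
          Complex.exp ((-Real.pi / (2 * a ^ 2) : ℝ))) := by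
    rw [← Complex.exp_add, ← Complex.exp_add, ← Complex.exp_add]; congr 1
    push_cast
    field_simp [ha']
    ring_nf; simp only [Complex.I_sq]; ring
  have key : gabor f x ω =
      Complex.exp ((-Real.pi / 2 * (x ^ 2 + ω ^ 2) : ℝ)) *
        (Complex.exp ((-(Real.pi * x * ω) : ℝ) * Complex.I) *
          (1 + c * Complex.exp (((Real.pi : ℂ) / (a : ℂ)) * ((x : ℂ) - Complex.I * (ω : ℂ))) *
            (Real.exp (-Real.pi / (2 * a ^ 2)) : ℂ))) := by
    rw [hsplit, gabor_shift, gabor_shift, e1, e2, Complex.ofReal_exp]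
    ring
  rw [key, norm_mul, norm_mul, Complex.norm_exp_ofReal, Complex.norm_exp_ofReal_mul_I, one_mul]
end

section
/- For a, γ > 0 and f_± := φ ± i γ T_{1/a} φ, it holds that |𝒢f_+(x, a k)| = |𝒢f_-(x, a k)| for every x ∈ ℝ and k ∈ ℤ; that is, the Gabor transform magnitudes of f_+ and f_- agree on all of ℝ × aℤ. -/
open MeasureTheory

open Complex Real

lemma int_eval (u v : ℂ) :
    ∫ t : ℝ, Complex.exp (-(2*(π:ℂ)) * (t:ℂ)^2 + (2*(π:ℂ)*u) * t + v)
      = ((π:ℂ)/(2*π)) ^ ((1:ℂ)/2) * Complex.exp (v + π * u^2 / 2) := by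
  have hb : (-(2*(π:ℂ))).re < 0 := by
    simp [Real.pi_pos]
  rw [integral_cexp_quadratic hb]
  have hπ : (π:ℂ) ≠ 0 := by exact_mod_cast Real.pi_ne_zero
  congr 2
  · ring_nf
  · field_simp
    ring

lemma gabor_eval (c : ℂ) (d x ω : ℝ) :
    gabor (fun t => gauss t + c * gauss (t - d)) x ω
    = (2:ℂ) ^ ((1:ℂ)/4) * (2:ℂ) ^ ((1:ℂ)/4) * ((π:ℂ)/(2*π)) ^ ((1:ℂ)/2) *
      (Complex.exp (-(π:ℂ)*x^2 + π*((x:ℂ) - I*ω)^2/2)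
        + c * Complex.exp (-(π:ℂ)*d^2 - π*x^2 + π*((x:ℂ)+d - I*ω)^2/2)) := by
  have h : ∀ t : ℝ,
      (gauss t + c * gauss (t - d)) *
          Complex.exp (-(π:ℂ) * ((t:ℂ) - (x:ℂ)) ^ 2) *
          Complex.exp (-2 * (π:ℂ) * I * (t:ℂ) * (ω:ℂ))
      = (2:ℂ) ^ ((1:ℂ)/4) *
          Complex.exp (-(2*(π:ℂ)) * (t:ℂ)^2 + (2*(π:ℂ)*((x:ℂ) - I*ω)) * t + (-(π:ℂ)*x^2))
        + (c * (2:ℂ) ^ ((1:ℂ)/4)) *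
          Complex.exp (-(2*(π:ℂ)) * (t:ℂ)^2 + (2*(π:ℂ)*((x:ℂ)+d - I*ω)) * t
            + (-(π:ℂ)*d^2 - π*x^2)) := by
    intro t
    simp only [gauss]
    push_cast
    rw [add_mul, add_mul]
    congr 1
    · rw [mul_assoc, mul_assoc, ← Complex.exp_add, ← Complex.exp_add]
      ring_nf
    · rw [show c * ((2:ℂ)^((1:ℂ)/4) * Complex.exp (-(π:ℂ) * ((t:ℂ)-(d:ℂ))^2)) *
          Complex.exp (-(π:ℂ) * ((t:ℂ) - (x:ℂ)) ^ 2) *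
          Complex.exp (-2 * (π:ℂ) * I * (t:ℂ) * (ω:ℂ))
        = (c * (2:ℂ)^((1:ℂ)/4)) * (Complex.exp (-(π:ℂ) * ((t:ℂ)-(d:ℂ))^2) *
          Complex.exp (-(π:ℂ) * ((t:ℂ) - (x:ℂ)) ^ 2) *
          Complex.exp (-2 * (π:ℂ) * I * (t:ℂ) * (ω:ℂ))) from by ring]
      rw [← Complex.exp_add, ← Complex.exp_add]
      ring_nf
  have hb : (0:ℝ) < ((2*(π:ℂ))).re := by simp [Real.pi_pos]
  have hi1 : Integrable (fun t : ℝ =>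
      Complex.exp (-(2*(π:ℂ)) * (t:ℂ)^2 + (2*(π:ℂ)*((x:ℂ) - I*ω)) * t + (-(π:ℂ)*x^2))) :=
    integrable_cexp_quadratic hb _ _
  have hi2 : Integrable (fun t : ℝ =>
      Complex.exp (-(2*(π:ℂ)) * (t:ℂ)^2 + (2*(π:ℂ)*((x:ℂ)+d - I*ω)) * t
        + (-(π:ℂ)*d^2 - π*x^2))) :=
    integrable_cexp_quadratic hb _ _
  rw [gabor]
  simp_rw [h]
  rw [integral_add (hi1.const_mul _) (hi2.const_mul _), integral_const_mul,
    integral_const_mul, int_eval, int_eval]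
  ring

lemma he1 (x ω : ℝ) :
    Complex.exp (-(π:ℂ)*x^2 + π*((x:ℂ) - I*ω)^2/2)
      = Complex.exp (-(π:ℂ)*I*x*ω) * ((Real.exp (-(π/2)*(x^2+ω^2)) : ℝ) : ℂ) := by
  rw [Complex.ofReal_exp, ← Complex.exp_add]
  congr 1
  push_cast
  linear_combination ((π:ℂ)*(ω:ℂ)^2/2) * Complex.I_sq

lemma he2 (d ω x : ℝ) (k : ℤ) (hdω : d * ω = (k:ℝ)) :
    Complex.exp (-(π:ℂ)*(d:ℂ)^2 - π*x^2 + π*((x:ℂ)+d - I*ω)^2/2)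
      = Complex.exp (-(π:ℂ)*I*x*ω) *
        (((-1:ℝ)^k * Real.exp (-(π/2)*((x-d)^2+ω^2)) : ℝ) : ℂ) := by
  have h : ((d:ℂ))*(ω:ℂ) = ((k:ℤ):ℂ) := by exact_mod_cast congrArg (fun r : ℝ => (r:ℂ)) hdω
  have hpow : (((-1:ℝ)^k : ℝ) : ℂ) = Complex.exp (((-k : ℤ):ℂ)*(π*I)) := by
    push_cast
    rw [show ((-(k:ℂ)) * ((π:ℂ)*I)) = ((-k : ℤ):ℂ) * ((π:ℂ)*I) from by push_cast; ring,
      Complex.exp_int_mul, Complex.exp_pi_mul_I]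
    rw [zpow_neg, ← inv_zpow, inv_neg, inv_one]
  rw [Complex.ofReal_mul, hpow, Complex.ofReal_exp]
  rw [show Complex.exp (-(π:ℂ)*I*x*ω) * (Complex.exp (((-k : ℤ):ℂ)*(π*I)) *
      Complex.exp (((-(π/2)*((x-d)^2+ω^2) : ℝ) : ℂ)))
    = Complex.exp (-(π:ℂ)*I*x*ω + ((-k : ℤ):ℂ)*(π*I) + ((-(π/2)*((x-d)^2+ω^2) : ℝ) : ℂ)) from by
      rw [Complex.exp_add, Complex.exp_add]; ring]
  congr 1
  push_cast
  linear_combination ((π:ℂ)*(ω:ℂ)^2/2) * Complex.I_sq + (-(π:ℂ)*I) * h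

/-- The Gabor magnitudes of f_+ = φ + iγ T_{1/a} φ and f_- = φ - iγ T_{1/a} φ agree
on all of ℝ × aℤ. -/
theorem gabor_counterexample_agree_on_lines (a γ : ℝ) (ha : 0 < a) (hγ : 0 < γ)
    (fplus fminus : ℝ → ℂ)
    (hplus : fplus = fun t => gauss t + Complex.I * (γ : ℂ) * gauss (t - 1 / a))
    (hminus : fminus = fun t => gauss t - Complex.I * (γ : ℂ) * gauss (t - 1 / a)) :
    ∀ (x : ℝ) (k : ℤ),
      ‖gabor fplus x (a * k)‖ = ‖gabor fminus x (a * k)‖ := by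
  intro x k
  have hm : fminus = fun t => gauss t + (-(Complex.I * (γ:ℂ))) * gauss (t - 1 / a) := by
    rw [hminus]; funext t; ring
  have hdω : (1/a) * (a * (k:ℝ)) = ((k:ℤ):ℝ) := by field_simp
  rw [hplus, hm, gabor_eval, gabor_eval, he1, he2 _ _ _ _ hdω]
  set ω : ℝ := a * (k:ℝ)
  set C : ℂ := (2:ℂ) ^ ((1:ℂ)/4) * (2:ℂ) ^ ((1:ℂ)/4) * ((π:ℂ)/(2*π)) ^ ((1:ℂ)/2)
  set m : ℂ := Complex.exp (-(π:ℂ)*I*x*ω)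
  set p : ℝ := Real.exp (-(π/2)*(x^2+ω^2))
  set q : ℝ := (-1:ℝ)^k * Real.exp (-(π/2)*((x-1/a)^2+ω^2))
  have e1 : C * (m * (p:ℂ) + Complex.I * (γ:ℂ) * (m * (q:ℂ)))
      = (C * m) * (((p:ℝ):ℂ) + ((γ*q : ℝ):ℂ) * I) := by push_cast; ring
  have e2 : C * (m * (p:ℂ) + (-(Complex.I * (γ:ℂ))) * (m * (q:ℂ)))
      = (C * m) * (((p:ℝ):ℂ) + ((-(γ*q) : ℝ):ℂ) * I) := by push_cast; ring
  rw [e1, e2]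
  simp only [norm_mul, Complex.norm_add_mul_I]
  rw [neg_sq]
end

section
/- Let a > 0, R > 0, and set γ₀ := e^{-(π/a)(R - 1/(2a))}. If 0 < γ < γ₀, then the Gabor transforms 𝒢f_± of f_± := φ ± i γ T_{1/a} φ have no zeros in the strip (-R, R) × ℝ of the time-frequency plane. -/
open MeasureTheory

/-- If 0 < γ < γ₀ = e^{-(π/a)(R - 1/(2a))}, then 𝒢f_± has no zeros in the strip (-R,R) × ℝ. -/
theorem gabor_counterexample_no_zeros_in_strip (a R γ : ℝ) (ha : 0 < a) (hR : 0 < R)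
    (hγ0 : 0 < γ) (hγ : γ < Real.exp (-(Real.pi / a) * (R - 1 / (2 * a))))
    (ε : ℝ) (hε : ε = 1 ∨ ε = -1) (f : ℝ → ℂ)
    (hf : f = fun t => gauss t + (ε : ℂ) * Complex.I * (γ : ℂ) * gauss (t - 1 / a)) :
    ∀ x ω : ℝ, x ∈ Set.Ioo (-R) R → gabor f x ω ≠ 0 := by
  intro x ω hx
  obtain ⟨hx1, hx2⟩ := hx
  have ha0 : (a : ℂ) ≠ 0 := by exact_mod_cast ha.ne'
  have hπ0 : (Real.pi : ℂ) ≠ 0 := Complex.ofReal_ne_zero.mpr Real.pi_ne_zero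
  set b : ℂ := -2 * (Real.pi : ℂ) with hb
  set c1 : ℂ := 2 * (Real.pi : ℂ) * (x : ℂ) - 2 * (Real.pi : ℂ) * Complex.I * (ω : ℂ) with hc1
  set d1 : ℂ := -(Real.pi : ℂ) * (x : ℂ) ^ 2 with hd1
  set c2 : ℂ := c1 + 2 * (Real.pi : ℂ) / (a : ℂ) with hc2
  set d2 : ℂ := d1 - (Real.pi : ℂ) / (a : ℂ) ^ 2 with hd2
  set w : ℂ := ((Real.pi * x / a - Real.pi / (2 * a ^ 2) : ℝ) : ℂ) +
      ((-(Real.pi * ω / a) : ℝ) : ℂ) * Complex.I with hw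
  have hbre : b.re < 0 := by
    simp [hb]; positivity
  have hb0 : b ≠ 0 := by
    intro h; rw [h] at hbre; simp at hbre
  -- pointwise expansion of the integrand
  have expand : ∀ t : ℝ,
      f t * Complex.exp (-(Real.pi : ℂ) * ((t : ℂ) - (x : ℂ)) ^ 2) *
        Complex.exp (-2 * (Real.pi : ℂ) * Complex.I * (t : ℂ) * (ω : ℂ)) =
      (2 : ℂ) ^ ((1 : ℂ) / 4) * Complex.exp (b * (t : ℂ) ^ 2 + c1 * (t : ℂ) + d1) +
      ((2 : ℂ) ^ ((1 : ℂ) / 4) * ((ε : ℂ) * Complex.I * (γ : ℂ))) *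
        Complex.exp (b * (t : ℂ) ^ 2 + c2 * (t : ℂ) + d2) := by
    intro t
    have h1 : b * (t : ℂ) ^ 2 + c1 * (t : ℂ) + d1 =
        (-(Real.pi : ℂ) * (t : ℂ) ^ 2) + (-(Real.pi : ℂ) * ((t : ℂ) - (x : ℂ)) ^ 2) +
          (-2 * (Real.pi : ℂ) * Complex.I * (t : ℂ) * (ω : ℂ)) := by
      simp only [hb, hc1, hd1]; ring
    have h2 : b * (t : ℂ) ^ 2 + c2 * (t : ℂ) + d2 =
        (-(Real.pi : ℂ) * ((t : ℂ) - 1 / (a : ℂ)) ^ 2) +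
          (-(Real.pi : ℂ) * ((t : ℂ) - (x : ℂ)) ^ 2) +
          (-2 * (Real.pi : ℂ) * Complex.I * (t : ℂ) * (ω : ℂ)) := by
      simp only [hb, hc2, hc1, hd2, hd1]
      field_simp [ha0, hπ0]
      ring
    rw [h1, h2, Complex.exp_add, Complex.exp_add, Complex.exp_add, Complex.exp_add]
    simp only [hf, gauss]
    push_cast
    ring
  have hint1 : Integrable (fun t : ℝ => Complex.exp (b * (t : ℂ) ^ 2 + c1 * (t : ℂ) + d1)) :=
    integrable_cexp_quadratic' hbre c1 d1
  have hint2 : Integrable (fun t : ℝ => Complex.exp (b * (t : ℂ) ^ 2 + c2 * (t : ℂ) + d2)) :=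
    integrable_cexp_quadratic' hbre c2 d2
  have hI : (∫ t : ℝ, f t * Complex.exp (-(Real.pi : ℂ) * ((t : ℂ) - (x : ℂ)) ^ 2) *
        Complex.exp (-2 * (Real.pi : ℂ) * Complex.I * (t : ℂ) * (ω : ℂ))) =
      (2 : ℂ) ^ ((1 : ℂ) / 4) *
        (∫ t : ℝ, Complex.exp (b * (t : ℂ) ^ 2 + c1 * (t : ℂ) + d1)) +
      ((2 : ℂ) ^ ((1 : ℂ) / 4) * ((ε : ℂ) * Complex.I * (γ : ℂ))) *
        (∫ t : ℝ, Complex.exp (b * (t : ℂ) ^ 2 + c2 * (t : ℂ) + d2)) := by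
    rw [integral_congr_ae (Filter.Eventually.of_forall expand),
      integral_add (hint1.const_mul _) (hint2.const_mul _),
      integral_const_mul, integral_const_mul]
  -- the exponent relation
  have hexp : d2 - c2 ^ 2 / (4 * b) = (d1 - c1 ^ 2 / (4 * b)) + w := by
    simp only [hd2, hc2, hw, hb, hc1, hd1]
    push_cast
    field_simp [ha0, hπ0]
    ring
  have hgabor : gabor f x ω =
      (2 : ℂ) ^ ((1 : ℂ) / 4) * ((2 : ℂ) ^ ((1 : ℂ) / 4) *
        (((Real.pi : ℂ) / -b) ^ ((1 : ℂ) / 2) * Complex.exp (d1 - c1 ^ 2 / (4 * b)) *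
          (1 + (ε : ℂ) * Complex.I * (γ : ℂ) * Complex.exp w))) := by
    rw [gabor, hI, integral_cexp_quadratic hbre c1 d1, integral_cexp_quadratic hbre c2 d2,
      hexp, Complex.exp_add]
    ring
  -- show each factor is nonzero
  have h2ne : (2 : ℂ) ^ ((1 : ℂ) / 4) ≠ 0 := by
    intro h
    rw [Complex.cpow_eq_zero_iff] at h
    exact two_ne_zero h.1
  have hPne : ((Real.pi : ℂ) / -b) ^ ((1 : ℂ) / 2) ≠ 0 := by
    intro h
    rw [Complex.cpow_eq_zero_iff] at h
    exact (div_ne_zero hπ0 (neg_ne_zero.mpr hb0)) h.1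
  -- modulus estimate
  have hwre : w.re = Real.pi * x / a - Real.pi / (2 * a ^ 2) := by
    rw [hw, Complex.add_re, Complex.ofReal_re, Complex.mul_re, Complex.ofReal_re,
      Complex.ofReal_im, Complex.I_re, Complex.I_im]
    ring
  have habs : ‖(ε : ℂ) * Complex.I * (γ : ℂ) * Complex.exp w‖ < 1 := by
    have hεabs : ‖(ε : ℂ)‖ = 1 := by
      rcases hε with h | h <;> simp [h]
    rw [norm_mul, norm_mul, norm_mul, hεabs, Complex.norm_I, Complex.norm_exp, hwre]
    simp only [one_mul]
    rw [Complex.norm_real, Real.norm_eq_abs, abs_of_pos hγ0]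
    calc γ * Real.exp (Real.pi * x / a - Real.pi / (2 * a ^ 2))
        < Real.exp (-(Real.pi / a) * (R - 1 / (2 * a))) *
            Real.exp (Real.pi * x / a - Real.pi / (2 * a ^ 2)) :=
          mul_lt_mul_of_pos_right hγ (Real.exp_pos _)
      _ = Real.exp (Real.pi * (x - R) / a) := by
          rw [← Real.exp_add]
          congr 1
          field_simp
          ring
      _ < 1 := by
          apply Real.exp_lt_one_iff.mpr
          have hπpos := Real.pi_pos
          exact div_neg_of_neg_of_pos (by nlinarith) ha
  have hsum : (1 : ℂ) + (ε : ℂ) * Complex.I * (γ : ℂ) * Complex.exp w ≠ 0 := by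
    intro h
    have hz : (ε : ℂ) * Complex.I * (γ : ℂ) * Complex.exp w = -1 := by
      linear_combination h
    rw [hz] at habs
    simp at habs
  rw [hgabor]
  exact mul_ne_zero h2ne (mul_ne_zero h2ne
    (mul_ne_zero (mul_ne_zero hPne (Complex.exp_ne_zero _)) hsum))
end
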